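/- With the setup of the Dirichlet-killed Brownian motion on (0,c), for all t > 0: ∫₀^c e^{-a}·e^{-c}·E_a[e^{X_t}; T_{(0,c)} > t] da = 2c·∑_{j=1}^∞ (-1)^{j+1}·(π²j²/(π²j² + c²)²)·exp(-π²j²t/(2c²))·(1 - (-1)^j·e^{-c})². -/

import Mathlib

open Real

open MeasureTheory

/-- The transition density of Brownian motion on `(0,c)` killed at the boundary:
`E_a[e^{X_t}; T_{(0,c)} > t] = ∫_0^c p^c_t(a,y) e^y dy`. -/
noncomputable def dirichletHeatKernel (c t x y : ℝ) : ℝ :=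
  (2 / c) * ∑' j : ℕ+, Real.exp (-π ^ 2 * j ^ 2 * t / (2 * c ^ 2)) *
    Real.sin (π * j * x / c) * Real.sin (π * j * y / c)


lemma sin_exp_primitive (k y : ℝ) :
    HasDerivAt (fun y => Real.exp y * (Real.sin (k*y) - k * Real.cos (k*y)) / (1+k^2))
      (Real.sin (k*y) * Real.exp y) y := by
  have hky : HasDerivAt (fun y : ℝ => k * y) k y := by
    simpa using (hasDerivAt_id y).const_mul k
  have hs : HasDerivAt (fun y => Real.sin (k*y)) (Real.cos (k*y) * k) y :=
    (Real.hasDerivAt_sin (k*y)).comp y hky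
  have hcos : HasDerivAt (fun y => Real.cos (k*y)) (-Real.sin (k*y) * k) y :=
    (Real.hasDerivAt_cos (k*y)).comp y hky
  have h1 : HasDerivAt (fun y => Real.sin (k*y) - k * Real.cos (k*y))
      (Real.cos (k*y) * k - k * (-Real.sin (k*y) * k)) y := hs.sub (hcos.const_mul k)
  have h2 := ((Real.hasDerivAt_exp y).mul h1).div_const (1+k^2)
  refine h2.congr_deriv ?_
  have hk2 : (1:ℝ) + k^2 ≠ 0 := by positivity
  rw [div_eq_iff hk2]
  ring

lemma neg_exp_sin_primitive (k a : ℝ) :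
    HasDerivAt (fun a => -(Real.exp (-a) * (Real.sin (k*a) + k * Real.cos (k*a))) / (1+k^2))
      (Real.exp (-a) * Real.sin (k*a)) a := by
  have hky : HasDerivAt (fun a : ℝ => k * a) k a := by
    simpa using (hasDerivAt_id a).const_mul k
  have hs : HasDerivAt (fun a => Real.sin (k*a)) (Real.cos (k*a) * k) a :=
    (Real.hasDerivAt_sin (k*a)).comp a hky
  have hcos : HasDerivAt (fun a => Real.cos (k*a)) (-Real.sin (k*a) * k) a :=
    (Real.hasDerivAt_cos (k*a)).comp a hky
  have hexp : HasDerivAt (fun a : ℝ => Real.exp (-a)) (-Real.exp (-a)) a := by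
    exact ((Real.hasDerivAt_exp (-a)).comp a ((hasDerivAt_id a).neg)).congr_deriv (by ring)
  have h1 : HasDerivAt (fun a => Real.sin (k*a) + k * Real.cos (k*a))
      (Real.cos (k*a) * k + k * (-Real.sin (k*a) * k)) a := hs.add (hcos.const_mul k)
  have h2 := (((hexp.mul h1)).neg).div_const (1+k^2)
  refine h2.congr_deriv ?_
  have hk2 : (1:ℝ) + k^2 ≠ 0 := by positivity
  rw [div_eq_iff hk2]
  ring

lemma sin_exp_integral (c : ℝ) (hc : 0 < c) (n : ℕ) :
    ∫ y in (0:ℝ)..c, Real.sin (π * n * y / c) * Real.exp y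
      = (π * n / c) * (1 - (-1:ℝ)^n * Real.exp c) / (1 + (π * n / c)^2) := by
  set k : ℝ := π * n / c with hk
  have hky : ∀ y : ℝ, π * n * y / c = k * y := fun y => by rw [hk]; ring
  simp only [hky]
  rw [intervalIntegral.integral_eq_sub_of_hasDerivAt
    (fun y _ => sin_exp_primitive k y) (Continuous.intervalIntegrable (by fun_prop) 0 c)]
  have hkc : k * c = n * π := by rw [hk]; field_simp
  have hsin : Real.sin (k * c) = 0 := by rw [hkc]; exact Real.sin_nat_mul_pi n
  have hcos : Real.cos (k * c) = (-1:ℝ)^n := by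
    rw [hkc]
    simpa using Real.cos_nat_mul_pi_sub 0 n
  rw [hsin, hcos]
  have hk2 : (1:ℝ) + k^2 ≠ 0 := by positivity
  simp only [mul_zero, Real.exp_zero, Real.cos_zero, Real.sin_zero]
  field_simp
  ring

lemma exp_sin_integral (c : ℝ) (hc : 0 < c) (n : ℕ) :
    ∫ a in (0:ℝ)..c, Real.exp (-a) * Real.sin (π * n * a / c)
      = (π * n / c) * (1 - (-1:ℝ)^n * Real.exp (-c)) / (1 + (π * n / c)^2) := by
  set k : ℝ := π * n / c with hk
  have hky : ∀ a : ℝ, π * n * a / c = k * a := fun a => by rw [hk]; ring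
  simp only [hky]
  rw [intervalIntegral.integral_eq_sub_of_hasDerivAt
    (fun a _ => neg_exp_sin_primitive k a) (Continuous.intervalIntegrable (by fun_prop) 0 c)]
  have hkc : k * c = n * π := by rw [hk]; field_simp
  have hsin : Real.sin (k * c) = 0 := by rw [hkc]; exact Real.sin_nat_mul_pi n
  have hcos : Real.cos (k * c) = (-1:ℝ)^n := by
    rw [hkc]
    simpa using Real.cos_nat_mul_pi_sub 0 n
  rw [hsin, hcos]
  have hk2 : (1:ℝ) + k^2 ≠ 0 := by positivity
  simp only [mul_zero, neg_zero, Real.exp_zero, Real.cos_zero, Real.sin_zero]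
  field_simp
  ring


lemma integral_tsum_swap' (c : ℝ) (hc : 0 < c) (g : ℕ+ → ℝ → ℝ) (B : ℕ+ → ℝ)
    (hgc : ∀ j, Continuous (g j))
    (hbd : ∀ j, ∀ y ∈ Set.Ioc (0:ℝ) c, |g j y| ≤ B j)
    (hB : Summable B) :
    ∫ y in (0:ℝ)..c, ∑' j, g j y = ∑' j, ∫ y in (0:ℝ)..c, g j y := by
  have hint : ∀ j, IntegrableOn (g j) (Set.Ioc 0 c) := fun j =>
    (intervalIntegrable_iff_integrableOn_Ioc_of_le hc.le).mp ((hgc j).intervalIntegrable 0 c)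
  have key : ∀ j, ∫ y in Set.Ioc (0:ℝ) c, ‖g j y‖ ≤ c * B j := by
    intro j
    have hconst : IntegrableOn (fun _ : ℝ => B j) (Set.Ioc 0 c) :=
      integrableOn_const measure_Ioc_lt_top.ne
    have h := setIntegral_mono_on ((hint j).norm) hconst measurableSet_Ioc
      (fun y hy => by simpa [Real.norm_eq_abs] using hbd j y hy)
    calc ∫ y in Set.Ioc (0:ℝ) c, ‖g j y‖ ≤ ∫ _ in Set.Ioc (0:ℝ) c, B j := h
      _ = c * B j := by
        rw [setIntegral_const, measureReal_def, Real.volume_Ioc, ENNReal.toReal_ofReal (by linarith)]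
        simp [smul_eq_mul]
  have hsum : Summable fun j => ∫ y in Set.Ioc (0:ℝ) c, ‖g j y‖ :=
    Summable.of_nonneg_of_le (fun j => integral_nonneg fun y => norm_nonneg _)
      key (hB.mul_left c)
  rw [intervalIntegral.integral_of_le hc.le,
    ← integral_tsum_of_summable_integral_norm hint hsum]
  exact tsum_congr fun j => (intervalIntegral.integral_of_le hc.le).symm

lemma summableE (c t : ℝ) (hc : 0 < c) (ht : 0 < t) :
    Summable (fun j : ℕ+ => Real.exp (-π^2 * (j:ℝ)^2 * t / (2*c^2))) := by
  set r : ℝ := Real.exp (-π^2 * t / (2*c^2)) with hr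
  have hr0 : 0 ≤ r := (Real.exp_pos _).le
  have hr1 : r < 1 := by
    rw [hr, Real.exp_lt_one_iff]
    have hπ : 0 < π := Real.pi_pos
    have : 0 < 2*c^2 := by positivity
    exact div_neg_of_neg_of_pos (by nlinarith [mul_pos (pow_pos hπ 2) ht]) this
  have hgeom : Summable (fun j : ℕ+ => r ^ (j:ℕ)) :=
    (summable_geometric_of_lt_one hr0 hr1).comp_injective (fun a b h => PNat.coe_injective h)
  apply Summable.of_nonneg_of_le (fun j => (Real.exp_pos _).le) _ hgeom
  intro j
  have : r ^ (j:ℕ) = Real.exp ((j:ℕ) * (-π^2 * t / (2*c^2))) := by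
    rw [hr, ← Real.exp_nat_mul]
  rw [this]
  apply Real.exp_le_exp.2
  have hj : (1:ℝ) ≤ (j:ℝ) := by exact_mod_cast j.one_le
  have hπ : 0 < π := Real.pi_pos
  have h1 : (j:ℝ) ≤ (j:ℝ)^2 := by nlinarith
  have h2 : 0 < 2 * c^2 := by positivity
  rw [mul_div_assoc', div_le_div_iff_of_pos_right h2]
  nlinarith [mul_le_mul_of_nonneg_left h1 (mul_pos (pow_pos hπ 2) ht).le]

lemma Sv_bound (c : ℝ) (hc : 0 < c) (n : ℕ) :
    |(π*(n:ℝ)/c) * (1 - (-1:ℝ)^n * Real.exp c) / (1+(π*(n:ℝ)/c)^2)| ≤ 1 + Real.exp c := by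
  set k := π*(n:ℝ)/c with hk
  have hk0 : 0 ≤ k := by rw [hk]; positivity
  have hd : (0:ℝ) < 1 + k^2 := by positivity
  rw [abs_div, abs_of_pos hd, abs_mul, abs_of_nonneg hk0, div_le_iff₀ hd]
  have h1 : |1 - (-1:ℝ)^n * Real.exp c| ≤ 1 + Real.exp c := by
    calc |1 - (-1:ℝ)^n * Real.exp c| ≤ |(1:ℝ)| + |(-1:ℝ)^n * Real.exp c| := abs_sub _ _
      _ = 1 + Real.exp c := by
        simp [abs_mul, abs_pow, Real.abs_exp]
  nlinarith [Real.exp_pos c, abs_nonneg (1 - (-1:ℝ)^n * Real.exp c), sq_nonneg (k-1),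
    mul_le_mul_of_nonneg_left h1 hk0]


theorem killed_bm_double_integral (c : ℝ) (hc : 0 < c) (t : ℝ) (ht : 0 < t) :
    ∫ a in (0:ℝ)..c, Real.exp (-a) * (Real.exp (-c) *
        ∫ y in (0:ℝ)..c, dirichletHeatKernel c t a y * Real.exp y) =
      2 * c * ∑' j : ℕ+, (-1 : ℝ) ^ ((j : ℕ) + 1) *
        (π ^ 2 * j ^ 2 / (π ^ 2 * j ^ 2 + c ^ 2) ^ 2) *
        Real.exp (-π ^ 2 * j ^ 2 * t / (2 * c ^ 2)) *
        (1 - (-1 : ℝ) ^ (j : ℕ) * Real.exp (-c)) ^ 2 := by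
  have hπ := Real.pi_pos
  have hsumE := summableE c t hc ht
  -- inner integral
  have inner_eq : ∀ a : ℝ,
      (∫ y in (0:ℝ)..c, dirichletHeatKernel c t a y * Real.exp y)
        = ∑' j : ℕ+, (2/c) * Real.exp (-π ^ 2 * (j:ℝ) ^ 2 * t / (2 * c ^ 2)) *
            Real.sin (π * (j:ℝ) * a / c) *
            ((π*(j:ℝ)/c) * (1 - (-1:ℝ)^(j:ℕ) * Real.exp c) / (1+(π*(j:ℝ)/c)^2)) := by
    intro a
    have h1 : ∀ y : ℝ, dirichletHeatKernel c t a y * Real.exp y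
        = ∑' j : ℕ+, (2/c) * (Real.exp (-π ^ 2 * (j:ℝ) ^ 2 * t / (2 * c ^ 2)) *
            Real.sin (π * (j:ℝ) * a / c) * Real.sin (π * (j:ℝ) * y / c)) * Real.exp y := by
      intro y
      rw [tsum_mul_right, tsum_mul_left, dirichletHeatKernel]
    simp only [h1]
    rw [integral_tsum_swap' c hc _
      (fun j => 2/c * Real.exp (-π ^ 2 * (j:ℝ) ^ 2 * t / (2 * c ^ 2)) * Real.exp c)
      (fun j => by fun_prop)
      (fun j y hy => by
        have hs1 : |Real.sin (π * (j:ℝ) * a / c)| ≤ 1 := abs_sin_le_one _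
        have hs2 : |Real.sin (π * (j:ℝ) * y / c)| ≤ 1 := abs_sin_le_one _
        have he : Real.exp y ≤ Real.exp c := Real.exp_le_exp.2 hy.2
        have h2c' : (0:ℝ) ≤ 2/c := by positivity
        calc |2/c * (Real.exp (-π ^ 2 * (j:ℝ) ^ 2 * t / (2 * c ^ 2)) *
              Real.sin (π * (j:ℝ) * a / c) * Real.sin (π * (j:ℝ) * y / c)) * Real.exp y|
            = 2/c * Real.exp (-π ^ 2 * (j:ℝ) ^ 2 * t / (2 * c ^ 2)) *
              (|Real.sin (π * (j:ℝ) * a / c)| * (|Real.sin (π * (j:ℝ) * y / c)| * Real.exp y)) := by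
              simp only [abs_mul, Real.abs_exp, abs_of_nonneg h2c']
              ring
          _ ≤ 2/c * Real.exp (-π ^ 2 * (j:ℝ) ^ 2 * t / (2 * c ^ 2)) * (1 * (1 * Real.exp c)) := by
              gcongr
          _ = 2/c * Real.exp (-π ^ 2 * (j:ℝ) ^ 2 * t / (2 * c ^ 2)) * Real.exp c := by ring
        )
      ((hsumE.mul_left (2/c)).mul_right (Real.exp c))]
    refine tsum_congr fun j => ?_
    have h2 : ∀ y : ℝ, (2/c) * (Real.exp (-π ^ 2 * (j:ℝ) ^ 2 * t / (2 * c ^ 2)) *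
          Real.sin (π * (j:ℝ) * a / c) * Real.sin (π * (j:ℝ) * y / c)) * Real.exp y
        = ((2/c) * Real.exp (-π ^ 2 * (j:ℝ) ^ 2 * t / (2 * c ^ 2)) * Real.sin (π * (j:ℝ) * a / c)) *
          (Real.sin (π * ((j:ℕ):ℝ) * y / c) * Real.exp y) := fun y => by push_cast; ring
    simp only [h2]
    rw [intervalIntegral.integral_const_mul, sin_exp_integral c hc (j:ℕ)]
  simp only [inner_eq]
  have h2 : ∀ a : ℝ, Real.exp (-a) * (Real.exp (-c) * ∑' j : ℕ+,
        (2/c) * Real.exp (-π ^ 2 * (j:ℝ) ^ 2 * t / (2 * c ^ 2)) * Real.sin (π * (j:ℝ) * a / c) *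
          ((π*(j:ℝ)/c) * (1 - (-1:ℝ)^(j:ℕ) * Real.exp c) / (1+(π*(j:ℝ)/c)^2)))
      = ∑' j : ℕ+, Real.exp (-a) * (Real.exp (-c) *
        ((2/c) * Real.exp (-π ^ 2 * (j:ℝ) ^ 2 * t / (2 * c ^ 2)) * Real.sin (π * (j:ℝ) * a / c) *
          ((π*(j:ℝ)/c) * (1 - (-1:ℝ)^(j:ℕ) * Real.exp c) / (1+(π*(j:ℝ)/c)^2)))) := by
    intro a
    rw [tsum_mul_left, tsum_mul_left]
  simp only [h2]
  rw [integral_tsum_swap' c hc _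
    (fun j => 2/c * Real.exp (-π ^ 2 * (j:ℝ) ^ 2 * t / (2 * c ^ 2)) * (1 + Real.exp c))
    (fun j => by fun_prop)
    (fun j a ha => by
      have hs1 : |Real.sin (π * (j:ℝ) * a / c)| ≤ 1 := abs_sin_le_one _
      have hSb : |(π*(j:ℝ)/c) * (1 - (-1:ℝ)^(j:ℕ) * Real.exp c) / (1+(π*(j:ℝ)/c)^2)|
          ≤ 1 + Real.exp c := by
        have := Sv_bound c hc (j:ℕ)
        push_cast at this ⊢
        exact this
      have hea : Real.exp (-a) ≤ 1 := Real.exp_le_one_iff.2 (by linarith [ha.1])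
      have hec : Real.exp (-c) ≤ 1 := Real.exp_le_one_iff.2 (by linarith)
      have h2c' : (0:ℝ) ≤ 2/c := by positivity
      calc |Real.exp (-a) * (Real.exp (-c) *
            ((2/c) * Real.exp (-π ^ 2 * (j:ℝ) ^ 2 * t / (2 * c ^ 2)) * Real.sin (π * (j:ℝ) * a / c) *
            ((π*(j:ℝ)/c) * (1 - (-1:ℝ)^(j:ℕ) * Real.exp c) / (1+(π*(j:ℝ)/c)^2))))|
          = Real.exp (-a) * (Real.exp (-c) *
            ((2/c) * Real.exp (-π ^ 2 * (j:ℝ) ^ 2 * t / (2 * c ^ 2)) * |Real.sin (π * (j:ℝ) * a / c)| *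
            |(π*(j:ℝ)/c) * (1 - (-1:ℝ)^(j:ℕ) * Real.exp c) / (1+(π*(j:ℝ)/c)^2)|)) := by
            simp only [abs_mul, Real.abs_exp, abs_of_nonneg h2c']
        _ ≤ 1 * (1 * ((2/c) * Real.exp (-π ^ 2 * (j:ℝ) ^ 2 * t / (2 * c ^ 2)) * 1 *
              (1 + Real.exp c))) := by gcongr
        _ = 2/c * Real.exp (-π ^ 2 * (j:ℝ) ^ 2 * t / (2 * c ^ 2)) * (1 + Real.exp c) := by ring)
    ((hsumE.mul_left (2/c)).mul_right (1 + Real.exp c))]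
  rw [← tsum_mul_left]
  refine tsum_congr fun j => ?_
  have h3 : ∀ a : ℝ, Real.exp (-a) * (Real.exp (-c) *
        ((2/c) * Real.exp (-π ^ 2 * (j:ℝ) ^ 2 * t / (2 * c ^ 2)) * Real.sin (π * (j:ℝ) * a / c) *
          ((π*(j:ℝ)/c) * (1 - (-1:ℝ)^(j:ℕ) * Real.exp c) / (1+(π*(j:ℝ)/c)^2))))
      = (Real.exp (-c) * ((2/c) * Real.exp (-π ^ 2 * (j:ℝ) ^ 2 * t / (2 * c ^ 2)) *
          ((π*(j:ℝ)/c) * (1 - (-1:ℝ)^(j:ℕ) * Real.exp c) / (1+(π*(j:ℝ)/c)^2)))) *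
        (Real.exp (-a) * Real.sin (π * ((j:ℕ):ℝ) * a / c)) := fun a => by push_cast; ring
  simp only [h3]
  rw [intervalIntegral.integral_const_mul, exp_sin_integral c hc (j:ℕ)]
  -- final algebra
  have hc0 : c ≠ 0 := hc.ne'
  have hu : Real.exp c ≠ 0 := (Real.exp_pos c).ne'
  have hd1 : (1:ℝ) + (π*(j:ℝ)/c)^2 ≠ 0 := by positivity
  have hd2 : π^2*(j:ℝ)^2 + c^2 ≠ 0 := by positivity
  rw [show Real.exp (-c) = (Real.exp c)⁻¹ from Real.exp_neg c]
  rcases Nat.even_or_odd (j:ℕ) with hpar | hpar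
  · rw [hpar.neg_one_pow, (hpar.add_one).neg_one_pow]
    push_cast
    field_simp
    ring
  · rw [hpar.neg_one_pow, (hpar.add_one).neg_one_pow]
    push_cast
    field_simp
    ring
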